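/- A linear map φ : S_2 → S_2 is a 1/2-derivation of the Schrödinger algebra S_2 if and only if there exist θ, β ∈ ℂ such that φ(e) = θe, φ(f) = θf, φ(h) = θh, φ(x_i) = θx_i and φ(y_i) = θy_i for i = 1, 2, φ(z) = θz, and φ(s_{12}) = θs_{12} + βz. Equivalently, every 1/2-derivation of S_2 is of the form φ = θ·id + β·ℜ for some θ, β ∈ ℂ, where ℜ is the linear map with ℜ(s_{12}) = z and ℜ vanishing on the other basis elements. -/

import Mathlib

noncomputable section

open Submodule

/-- Index type for the standard basis
`{e, f, h, z, x_i, y_i (1 ≤ i ≤ n), s_{jk} (1 ≤ j < k ≤ n)}`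
of the Schrödinger algebra `S_n` (indices shifted to start from `0`). -/
inductive SIdx (n : ℕ) : Type where
  | E : SIdx n
  | F : SIdx n
  | H : SIdx n
  | Z : SIdx n
  | X : Fin n → SIdx n
  | Y : Fin n → SIdx n
  | S : (j k : Fin n) → j < k → SIdx n

/-- Kronecker delta with values in `ℂ`. -/
def kd {n : ℕ} (i j : Fin n) : ℂ := if i = j then 1 else 0

variable {n : ℕ} {L : Type*} [LieRing L] [LieAlgebra ℂ L]

/-- The element `s_{jk}` for arbitrary indices, with the convention
`s_{kj} = -s_{jk}` and `s_{jj} = 0`. -/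
def sg (b : Module.Basis (SIdx n) ℂ L) (j k : Fin n) : L :=
  if h : j < k then b (.S j k h)
  else if h' : k < j then - b (.S k j h')
  else 0

/-- A basis of a complex Lie algebra indexed by `SIdx n` realizes the
Schrödinger algebra `S_n` if the brackets of basis vectors are as follows
(all brackets of basis vectors not determined by the relations below and
anticommutativity are zero). -/
structure IsSchrodinger (b : Module.Basis (SIdx n) ℂ L) : Prop where
  lie_e_f : ⁅b .E, b .F⁆ = b .H
  lie_h_e : ⁅b .H, b .E⁆ = (2 : ℂ) • b .E
  lie_f_h : ⁅b .F, b .H⁆ = (2 : ℂ) • b .F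
  lie_x_y : ∀ i j, ⁅b (.X i), b (.Y j)⁆ = kd i j • b .Z
  lie_x_x : ∀ i j, ⁅b (.X i), b (.X j)⁆ = 0
  lie_y_y : ∀ i j, ⁅b (.Y i), b (.Y j)⁆ = 0
  lie_h_x : ∀ i, ⁅b .H, b (.X i)⁆ = b (.X i)
  lie_h_y : ∀ i, ⁅b .H, b (.Y i)⁆ = - b (.Y i)
  lie_e_y : ∀ i, ⁅b .E, b (.Y i)⁆ = b (.X i)
  lie_e_x : ∀ i, ⁅b .E, b (.X i)⁆ = 0
  lie_f_x : ∀ i, ⁅b .F, b (.X i)⁆ = b (.Y i)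
  lie_f_y : ∀ i, ⁅b .F, b (.Y i)⁆ = 0
  lie_z : ∀ u : SIdx n, ⁅b .Z, b u⁆ = 0
  lie_s_x : ∀ j k i, ⁅sg b j k, b (.X i)⁆ = kd k i • b (.X j) - kd j i • b (.X k)
  lie_s_y : ∀ j k i, ⁅sg b j k, b (.Y i)⁆ = kd k i • b (.Y j) - kd j i • b (.Y k)
  lie_s_s : ∀ j k l m, ⁅sg b j k, sg b l m⁆ =
      kd l k • sg b j m + kd j m • sg b k l + kd m k • sg b l j + kd l j • sg b m k
  lie_e_s : ∀ j k, ⁅b .E, sg b j k⁆ = 0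
  lie_f_s : ∀ j k, ⁅b .F, sg b j k⁆ = 0
  lie_h_s : ∀ j k, ⁅b .H, sg b j k⁆ = 0

/-- A `1/2`-derivation of a complex Lie algebra: a linear map `φ` with
`φ([x,y]) = (1/2)([φ(x),y] + [x,φ(y)])`. -/
def IsHalfDeriv (φ : L →ₗ[ℂ] L) : Prop :=
  ∀ x y : L, φ ⁅x, y⁆ = (2⁻¹ : ℂ) • (⁅φ x, y⁆ + ⁅x, φ y⁆)

/-- The set of basis vectors spanning the even part `(S_n)₀`:
`{e, f, h, z, s_{kl}}`. -/
def evenSet (b : Module.Basis (SIdx n) ℂ L) : Set L :=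
  {v | v = b .E ∨ v = b .F ∨ v = b .H ∨ v = b .Z ∨ ∃ j k, ∃ h : j < k, v = b (.S j k h)}

/-- The set of basis vectors spanning the odd part `(S_n)₁`: `{x_i, y_i}`. -/
def oddSet (b : Module.Basis (SIdx n) ℂ L) : Set L :=
  {v | ∃ i : Fin n, v = b (.X i) ∨ v = b (.Y i)}

-- AUX START
deriving instance DecidableEq for SIdx

theorem h01 : (0 : Fin 2) < 1 := by decide

instance : Fintype (SIdx 2) where
  elems := {.E, .F, .H, .Z, .X 0, .X 1, .Y 0, .Y 1, .S 0 1 h01}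
  complete := by
    intro x
    cases x with
    | X i => fin_cases i <;> decide
    | Y i => fin_cases i <;> decide
    | S j k h => fin_cases j <;> fin_cases k <;>
        first | exact absurd h (by decide) | exact (show SIdx.S 0 1 h01 ∈ _ by decide)
    | _ => decide

theorem sum_SIdx2 {M : Type*} [AddCommMonoid M] (g : SIdx 2 → M) :
    ∑ i, g i = g .E + g .F + g .H + g .Z + g (.X 0) + g (.X 1) + g (.Y 0) + g (.Y 1)
      + g (.S 0 1 h01) := by
  show Finset.sum _ g = _
  rw [show (Finset.univ : Finset (SIdx 2)) =
    {.E, .F, .H, .Z, .X 0, .X 1, .Y 0, .Y 1, .S 0 1 h01} from rfl]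
  simp [Finset.sum_insert, Finset.mem_insert]
  abel

section Tbl
variable {b : Module.Basis (SIdx 2) ℂ L}

theorem sg01 : sg b 0 1 = b (.S 0 1 h01) := by rw [sg, dif_pos h01]

theorem expand (x : L) :
    x = b.repr x .E • b .E + b.repr x .F • b .F + b.repr x .H • b .H + b.repr x .Z • b .Z
      + b.repr x (.X 0) • b (.X 0) + b.repr x (.X 1) • b (.X 1)
      + b.repr x (.Y 0) • b (.Y 0) + b.repr x (.Y 1) • b (.Y 1)
      + b.repr x (.S 0 1 h01) • b (.S 0 1 h01) := by
  conv_lhs => rw [← b.sum_repr x]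
  exact sum_SIdx2 _

set_option linter.unusedSectionVars false

variable (hb : IsSchrodinger b)
include hb

theorem Tef : ⁅b .E, b .F⁆ = b .H := hb.lie_e_f
theorem Tfe : ⁅b .F, b .E⁆ = -b .H := by rw [← lie_skew, hb.lie_e_f]
theorem The : ⁅b .H, b .E⁆ = (2:ℂ) • b .E := hb.lie_h_e
theorem Teh : ⁅b .E, b .H⁆ = -((2:ℂ) • b .E) := by rw [← lie_skew, hb.lie_h_e]
theorem Tfh : ⁅b .F, b .H⁆ = (2:ℂ) • b .F := hb.lie_f_h
theorem Thf : ⁅b .H, b .F⁆ = -((2:ℂ) • b .F) := by rw [← lie_skew, hb.lie_f_h]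
theorem Txy (i j) : ⁅b (.X i), b (.Y j)⁆ = kd i j • b .Z := hb.lie_x_y i j
theorem Tyx (i j) : ⁅b (.Y i), b (.X j)⁆ = -(kd j i • b .Z) := by
  rw [← lie_skew, hb.lie_x_y]
theorem Txx (i j) : ⁅b (.X i), b (.X j)⁆ = 0 := hb.lie_x_x i j
theorem Tyy (i j) : ⁅b (.Y i), b (.Y j)⁆ = 0 := hb.lie_y_y i j
theorem Thx (i) : ⁅b .H, b (.X i)⁆ = b (.X i) := hb.lie_h_x i
theorem Txh (i) : ⁅b (.X i), b .H⁆ = -b (.X i) := by rw [← lie_skew, hb.lie_h_x]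
theorem Thy (i) : ⁅b .H, b (.Y i)⁆ = -b (.Y i) := hb.lie_h_y i
theorem Tyh (i) : ⁅b (.Y i), b .H⁆ = b (.Y i) := by rw [← lie_skew, hb.lie_h_y, neg_neg]
theorem Tey (i) : ⁅b .E, b (.Y i)⁆ = b (.X i) := hb.lie_e_y i
theorem Tye (i) : ⁅b (.Y i), b .E⁆ = -b (.X i) := by rw [← lie_skew, hb.lie_e_y]
theorem Tex (i) : ⁅b .E, b (.X i)⁆ = 0 := hb.lie_e_x i
theorem Txe (i) : ⁅b (.X i), b .E⁆ = 0 := by rw [← lie_skew, hb.lie_e_x, neg_zero]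
theorem Tfx (i) : ⁅b .F, b (.X i)⁆ = b (.Y i) := hb.lie_f_x i
theorem Txf (i) : ⁅b (.X i), b .F⁆ = -b (.Y i) := by rw [← lie_skew, hb.lie_f_x]
theorem Tfy (i) : ⁅b .F, b (.Y i)⁆ = 0 := hb.lie_f_y i
theorem Tyf (i) : ⁅b (.Y i), b .F⁆ = 0 := by rw [← lie_skew, hb.lie_f_y, neg_zero]
theorem Tzu (u) : ⁅b .Z, b u⁆ = 0 := hb.lie_z u
theorem Tuz (u) : ⁅b u, b .Z⁆ = 0 := by rw [← lie_skew, hb.lie_z, neg_zero]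
theorem Tsx (i) : ⁅b (.S 0 1 h01), b (.X i)⁆ = kd 1 i • b (.X 0) - kd 0 i • b (.X 1) := by
  rw [← sg01, hb.lie_s_x]
theorem Txs (i) : ⁅b (.X i), b (.S 0 1 h01)⁆ = kd 0 i • b (.X 1) - kd 1 i • b (.X 0) := by
  rw [← lie_skew, ← sg01, hb.lie_s_x, neg_sub]
theorem Tsy (i) : ⁅b (.S 0 1 h01), b (.Y i)⁆ = kd 1 i • b (.Y 0) - kd 0 i • b (.Y 1) := by
  rw [← sg01, hb.lie_s_y]
theorem Tys (i) : ⁅b (.Y i), b (.S 0 1 h01)⁆ = kd 0 i • b (.Y 1) - kd 1 i • b (.Y 0) := by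
  rw [← lie_skew, ← sg01, hb.lie_s_y, neg_sub]
theorem Tss : ⁅b (.S 0 1 h01), b (.S 0 1 h01)⁆ = 0 := lie_self _
theorem Tes : ⁅b .E, b (.S 0 1 h01)⁆ = 0 := by rw [← sg01]; exact hb.lie_e_s 0 1
theorem Tse : ⁅b (.S 0 1 h01), b .E⁆ = 0 := by rw [← lie_skew, ← sg01, hb.lie_e_s, neg_zero]
theorem Tfs : ⁅b .F, b (.S 0 1 h01)⁆ = 0 := by rw [← sg01]; exact hb.lie_f_s 0 1
theorem Tsf : ⁅b (.S 0 1 h01), b .F⁆ = 0 := by rw [← lie_skew, ← sg01, hb.lie_f_s, neg_zero]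
theorem Ths : ⁅b .H, b (.S 0 1 h01)⁆ = 0 := by rw [← sg01]; exact hb.lie_h_s 0 1
theorem Tsh : ⁅b (.S 0 1 h01), b .H⁆ = 0 := by rw [← lie_skew, ← sg01, hb.lie_h_s, neg_zero]




omit hb in
theorem coeff_zero (b : Module.Basis (SIdx 2) ℂ L) (aE aF aH aZ aX0 aX1 aY0 aY1 aS : ℂ)
    (h : aE • b .E + aF • b .F + aH • b .H + aZ • b .Z + aX0 • b (.X 0) + aX1 • b (.X 1)
      + aY0 • b (.Y 0) + aY1 • b (.Y 1) + aS • b (.S 0 1 h01) = 0) :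
    aE = 0 ∧ aF = 0 ∧ aH = 0 ∧ aZ = 0 ∧ aX0 = 0 ∧ aX1 = 0 ∧ aY0 = 0 ∧ aY1 = 0 ∧ aS = 0 := by
  let g : SIdx 2 → ℂ := fun v =>
    match v with
    | .E => aE | .F => aF | .H => aH | .Z => aZ
    | .X i => if i = 0 then aX0 else aX1
    | .Y i => if i = 0 then aY0 else aY1
    | .S _ _ _ => aS
  have hg : ∑ v, g v • b v = 0 := by
    rw [sum_SIdx2]
    simpa [g] using h
  have h0 := Fintype.linearIndependent_iff.mp b.linearIndependent g hg
  refine ⟨h0 .E, h0 .F, h0 .H, h0 .Z, ?_, ?_, ?_, ?_, h0 (.S 0 1 h01)⟩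
  · simpa [g] using h0 (.X 0)
  · simpa [g] using h0 (.X 1)
  · simpa [g] using h0 (.Y 0)
  · simpa [g] using h0 (.Y 1)

end Tbl

set_option maxHeartbeats 4000000 in
/-- A linear map `φ` on the Schrödinger algebra `S₂` is a
`1/2`-derivation if and only if there exist `θ, β ∈ ℂ` with `φ(e) = θe`,
`φ(f) = θf`, `φ(h) = θh`, `φ(x_i) = θx_i`, `φ(y_i) = θy_i`, `φ(z) = θz` and
`φ(s₁₂) = θs₁₂ + βz`; equivalently, `φ = θ·id + β·ℜ`. -/
theorem half_derivation_S2_iff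
    (L : Type*) [LieRing L] [LieAlgebra ℂ L]
    (b : Module.Basis (SIdx 2) ℂ L) (hb : IsSchrodinger b)
    (φ : L →ₗ[ℂ] L) :
    IsHalfDeriv φ ↔ ∃ θ β : ℂ,
      φ (b .E) = θ • b .E ∧
      φ (b .F) = θ • b .F ∧
      φ (b .H) = θ • b .H ∧
      (∀ i : Fin 2, φ (b (.X i)) = θ • b (.X i)) ∧
      (∀ i : Fin 2, φ (b (.Y i)) = θ • b (.Y i)) ∧
      φ (b .Z) = θ • b .Z ∧
      φ (b (.S 0 1 (by decide))) = θ • b (.S 0 1 (by decide)) + β • b .Z := by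
  constructor
  · intro hφ0
    have hφ : ∀ x y : L, φ ⁅x, y⁆ = (2⁻¹ : ℂ) • (⁅φ x, y⁆ + ⁅x, φ y⁆) := hφ0
    have hxE := expand (b := b) (φ (b (SIdx.E)))
    have hxF := expand (b := b) (φ (b (SIdx.F)))
    have hxH := expand (b := b) (φ (b (SIdx.H)))
    have hxZ := expand (b := b) (φ (b (SIdx.Z)))
    have hxX0 := expand (b := b) (φ (b (SIdx.X 0)))
    have hxX1 := expand (b := b) (φ (b (SIdx.X 1)))
    have hxY0 := expand (b := b) (φ (b (SIdx.Y 0)))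
    have hxY1 := expand (b := b) (φ (b (SIdx.Y 1)))
    have hxS := expand (b := b) (φ (b (SIdx.S 0 1 h01)))
    have p0 := hφ (b (SIdx.H)) (b (SIdx.E))
    rw [The hb, map_smul] at p0
    rw [hxH, hxE] at p0
    simp [Tef hb, Tfe hb, The hb, Teh hb, Tfh hb, Thf hb, Txy hb, Tyx hb, Txx hb, Tyy hb, Thx hb, Txh hb, Thy hb, Tyh hb, Tey hb, Tye hb, Tex hb, Txe hb, Tfx hb, Txf hb, Tfy hb, Tyf hb, Tzu hb, Tuz hb, Tsx hb, Txs hb, Tsy hb, Tys hb, Tss hb, Tes hb, Tse hb, Tfs hb, Tsf hb, Ths hb, Tsh hb, lie_self, add_lie, smul_lie, lie_add, lie_smul, sub_lie, lie_sub, neg_lie, lie_neg, smul_add, smul_sub, smul_neg, neg_smul, smul_smul, smul_zero, zero_smul, lie_zero, zero_lie, kd] at p0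
    have P0 : ((1 : ℂ) * (b.repr (φ (b (SIdx.E)))) (SIdx.E) + (-1 : ℂ) * (b.repr (φ (b (SIdx.H)))) (SIdx.H)) • b (SIdx.E) + ((3 : ℂ) * (b.repr (φ (b (SIdx.E)))) (SIdx.F)) • b (SIdx.F) + ((2 : ℂ) * (b.repr (φ (b (SIdx.E)))) (SIdx.H) + ((1 : ℂ)/2) * (b.repr (φ (b (SIdx.H)))) (SIdx.F)) • b (SIdx.H) + ((2 : ℂ) * (b.repr (φ (b (SIdx.E)))) (SIdx.Z)) • b (SIdx.Z) + (((3 : ℂ)/2) * (b.repr (φ (b (SIdx.E)))) (SIdx.X 0) + ((1 : ℂ)/2) * (b.repr (φ (b (SIdx.H)))) (SIdx.Y 0)) • b (SIdx.X 0) + (((3 : ℂ)/2) * (b.repr (φ (b (SIdx.E)))) (SIdx.X 1) + ((1 : ℂ)/2) * (b.repr (φ (b (SIdx.H)))) (SIdx.Y 1)) • b (SIdx.X 1) + (((5 : ℂ)/2) * (b.repr (φ (b (SIdx.E)))) (SIdx.Y 0)) • b (SIdx.Y 0) + (((5 : ℂ)/2) * (b.repr (φ (b (SIdx.E)))) (SIdx.Y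 1)) • b (SIdx.Y 1) + ((2 : ℂ) * (b.repr (φ (b (SIdx.E)))) (SIdx.S 0 1 h01)) • b (SIdx.S 0 1 h01) = (0 : L) := by
      linear_combination (norm := module) p0
    obtain ⟨q0_0, q0_1, q0_2, q0_3, q0_4, q0_5, q0_6, q0_7, q0_8⟩ := coeff_zero b _ _ _ _ _ _ _ _ _ P0
    have p1 := hφ (b (SIdx.F)) (b (SIdx.H))
    rw [Tfh hb, map_smul] at p1
    rw [hxF, hxH] at p1
    simp [Tef hb, Tfe hb, The hb, Teh hb, Tfh hb, Thf hb, Txy hb, Tyx hb, Txx hb, Tyy hb, Thx hb, Txh hb, Thy hb, Tyh hb, Tey hb, Tye hb, Tex hb, Txe hb, Tfx hb, Txf hb, Tfy hb, Tyf hb, Tzu hb, Tuz hb, Tsx hb, Txs hb, Tsy hb, Tys hb, Tss hb, Tes hb, Tse hb, Tfs hb, Tsf hb, Ths hb, Tsh hb, lie_self, add_lie, smul_lie, lie_add, lie_smul, sub_lie, lie_sub, neg_lie, lie_neg, smul_add, smul_sub, smul_neg, neg_smul, smul_smul, smul_zero, zero_smul, lie_zero, zero_lie, kd] at p1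
    have P1 : ((3 : ℂ) * (b.repr (φ (b (SIdx.F)))) (SIdx.E)) • b (SIdx.E) + ((1 : ℂ) * (b.repr (φ (b (SIdx.F)))) (SIdx.F) + (-1 : ℂ) * (b.repr (φ (b (SIdx.H)))) (SIdx.H)) • b (SIdx.F) + ((2 : ℂ) * (b.repr (φ (b (SIdx.F)))) (SIdx.H) + ((1 : ℂ)/2) * (b.repr (φ (b (SIdx.H)))) (SIdx.E)) • b (SIdx.H) + ((2 : ℂ) * (b.repr (φ (b (SIdx.F)))) (SIdx.Z)) • b (SIdx.Z) + (((5 : ℂ)/2) * (b.repr (φ (b (SIdx.F)))) (SIdx.X 0)) • b (SIdx.X 0) + (((5 : ℂ)/2) * (b.repr (φ (b (SIdx.F)))) (SIdx.X 1)) • b (SIdx.X 1) + (((3 : ℂ)/2) * (b.repr (φ (b (SIdx.F)))) (SIdx.Y 0) + ((-1 : ℂ)/2) * (b.repr (φ (b (SIdx.H)))) (SIdx.X 0)) • b (SIdx.Y 0) + (((3 : ℂ)/2) * (b.repr (φ (b (SIdx.F)))) (SIdx.Y 1) + ((-1 : ℂ)/2) * (b.repr (φ (b (SIdx.H)))) (SIdx.X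 1)) • b (SIdx.Y 1) + ((2 : ℂ) * (b.repr (φ (b (SIdx.F)))) (SIdx.S 0 1 h01)) • b (SIdx.S 0 1 h01) = (0 : L) := by
      linear_combination (norm := module) p1
    obtain ⟨q1_0, q1_1, q1_2, q1_3, q1_4, q1_5, q1_6, q1_7, q1_8⟩ := coeff_zero b _ _ _ _ _ _ _ _ _ P1
    have p2 := hφ (b (SIdx.E)) (b (SIdx.F))
    rw [Tef hb] at p2
    rw [hxE, hxF, hxH] at p2
    simp [Tef hb, Tfe hb, The hb, Teh hb, Tfh hb, Thf hb, Txy hb, Tyx hb, Txx hb, Tyy hb, Thx hb, Txh hb, Thy hb, Tyh hb, Tey hb, Tye hb, Tex hb, Txe hb, Tfx hb, Txf hb, Tfy hb, Tyf hb, Tzu hb, Tuz hb, Tsx hb, Txs hb, Tsy hb, Tys hb, Tss hb, Tes hb, Tse hb, Tfs hb, Tsf hb, Ths hb, Tsh hb, lie_self, add_lie, smul_lie, lie_add, lie_smul, sub_lie, lie_sub, neg_lie, lie_neg, smul_add, smul_sub, smul_neg, neg_smul, smul_smul, smul_zero, zero_smul, lie_zero, zero_lie, kd] at p2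
    have P2 : ((1 : ℂ) * (b.repr (φ (b (SIdx.F)))) (SIdx.H) + (1 : ℂ) * (b.repr (φ (b (SIdx.H)))) (SIdx.E)) • b (SIdx.E) + ((1 : ℂ) * (b.repr (φ (b (SIdx.E)))) (SIdx.H) + (1 : ℂ) * (b.repr (φ (b (SIdx.H)))) (SIdx.F)) • b (SIdx.F) + (((-1 : ℂ)/2) * (b.repr (φ (b (SIdx.E)))) (SIdx.E) + ((-1 : ℂ)/2) * (b.repr (φ (b (SIdx.F)))) (SIdx.F) + (1 : ℂ) * (b.repr (φ (b (SIdx.H)))) (SIdx.H)) • b (SIdx.H) + ((1 : ℂ) * (b.repr (φ (b (SIdx.H)))) (SIdx.Z)) • b (SIdx.Z) + (((-1 : ℂ)/2) * (b.repr (φ (b (SIdx.F)))) (SIdx.Y 0) + (1 : ℂ) * (b.repr (φ (b (SIdx.H)))) (SIdx.X 0)) • b (SIdx.X 0) + (((-1 : ℂ)/2) * (b.repr (φ (b (SIdx.F)))) (SIdx.Y 1) + (1 : ℂ) * (b.repr (φ (b (SIdx.H)))) (SIdx.X 1)) • b (SIdx.X 1) + (((1 : ℂ)/2) * (b.repr (φ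 (b (SIdx.E)))) (SIdx.X 0) + (1 : ℂ) * (b.repr (φ (b (SIdx.H)))) (SIdx.Y 0)) • b (SIdx.Y 0) + (((1 : ℂ)/2) * (b.repr (φ (b (SIdx.E)))) (SIdx.X 1) + (1 : ℂ) * (b.repr (φ (b (SIdx.H)))) (SIdx.Y 1)) • b (SIdx.Y 1) + ((1 : ℂ) * (b.repr (φ (b (SIdx.H)))) (SIdx.S 0 1 h01)) • b (SIdx.S 0 1 h01) = (0 : L) := by
      linear_combination (norm := module) p2
    obtain ⟨q2_0, q2_1, q2_2, q2_3, q2_4, q2_5, q2_6, q2_7, q2_8⟩ := coeff_zero b _ _ _ _ _ _ _ _ _ P2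
    have p3 := hφ (b (SIdx.H)) (b (SIdx.X 0))
    rw [Thx hb] at p3
    rw [hxH, hxX0] at p3
    simp [Tef hb, Tfe hb, The hb, Teh hb, Tfh hb, Thf hb, Txy hb, Tyx hb, Txx hb, Tyy hb, Thx hb, Txh hb, Thy hb, Tyh hb, Tey hb, Tye hb, Tex hb, Txe hb, Tfx hb, Txf hb, Tfy hb, Tyf hb, Tzu hb, Tuz hb, Tsx hb, Txs hb, Tsy hb, Tys hb, Tss hb, Tes hb, Tse hb, Tfs hb, Tsf hb, Ths hb, Tsh hb, lie_self, add_lie, smul_lie, lie_add, lie_smul, sub_lie, lie_sub, neg_lie, lie_neg, smul_add, smul_sub, smul_neg, neg_smul, smul_smul, smul_zero, zero_smul, lie_zero, zero_lie, kd] at p3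
    have P3 : ((0 : ℂ)) • b (SIdx.E) + ((2 : ℂ) * (b.repr (φ (b (SIdx.X 0)))) (SIdx.F)) • b (SIdx.F) + ((1 : ℂ) * (b.repr (φ (b (SIdx.X 0)))) (SIdx.H)) • b (SIdx.H) + (((1 : ℂ)/2) * (b.repr (φ (b (SIdx.H)))) (SIdx.Y 0) + (1 : ℂ) * (b.repr (φ (b (SIdx.X 0)))) (SIdx.Z)) • b (SIdx.Z) + (((-1 : ℂ)/2) * (b.repr (φ (b (SIdx.H)))) (SIdx.H) + ((1 : ℂ)/2) * (b.repr (φ (b (SIdx.X 0)))) (SIdx.X 0)) • b (SIdx.X 0) + (((1 : ℂ)/2) * (b.repr (φ (b (SIdx.H)))) (SIdx.S 0 1 h01) + ((1 : ℂ)/2) * (b.repr (φ (b (SIdx.X 0)))) (SIdx.X 1)) • b (SIdx.X 1) + (((-1 : ℂ)/2) * (b.repr (φ (b (SIdx.H)))) (SIdx.F) + ((3 : ℂ)/2) * (b.repr (φ (b (SIdx.X 0)))) (SIdx.Y 0)) • b (SIdx.Y 0) + (((3 : ℂ)/2) * (b.repr (φ (b (SIdx.X 0)))) (SIdx.Y 1))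 • b (SIdx.Y 1) + ((1 : ℂ) * (b.repr (φ (b (SIdx.X 0)))) (SIdx.S 0 1 h01)) • b (SIdx.S 0 1 h01) = (0 : L) := by
      linear_combination (norm := module) p3
    obtain ⟨q3_0, q3_1, q3_2, q3_3, q3_4, q3_5, q3_6, q3_7, q3_8⟩ := coeff_zero b _ _ _ _ _ _ _ _ _ P3
    have p4 := hφ (b (SIdx.H)) (b (SIdx.X 1))
    rw [Thx hb] at p4
    rw [hxH, hxX1] at p4
    simp [Tef hb, Tfe hb, The hb, Teh hb, Tfh hb, Thf hb, Txy hb, Tyx hb, Txx hb, Tyy hb, Thx hb, Txh hb, Thy hb, Tyh hb, Tey hb, Tye hb, Tex hb, Txe hb, Tfx hb, Txf hb, Tfy hb, Tyf hb, Tzu hb, Tuz hb, Tsx hb, Txs hb, Tsy hb, Tys hb, Tss hb, Tes hb, Tse hb, Tfs hb, Tsf hb, Ths hb, Tsh hb, lie_self, add_lie, smul_lie, lie_add, lie_smul, sub_lie, lie_sub, neg_lie, lie_neg, smul_add, smul_sub, smul_neg, neg_smul, smul_smul, smul_zero, zero_smul, lie_zero, zero_lie, kd] at p4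
    have P4 : ((0 : ℂ)) • b (SIdx.E) + ((2 : ℂ) * (b.repr (φ (b (SIdx.X 1)))) (SIdx.F)) • b (SIdx.F) + ((1 : ℂ) * (b.repr (φ (b (SIdx.X 1)))) (SIdx.H)) • b (SIdx.H) + (((1 : ℂ)/2) * (b.repr (φ (b (SIdx.H)))) (SIdx.Y 1) + (1 : ℂ) * (b.repr (φ (b (SIdx.X 1)))) (SIdx.Z)) • b (SIdx.Z) + (((-1 : ℂ)/2) * (b.repr (φ (b (SIdx.H)))) (SIdx.S 0 1 h01) + ((1 : ℂ)/2) * (b.repr (φ (b (SIdx.X 1)))) (SIdx.X 0)) • b (SIdx.X 0) + (((-1 : ℂ)/2) * (b.repr (φ (b (SIdx.H)))) (SIdx.H) + ((1 : ℂ)/2) * (b.repr (φ (b (SIdx.X 1)))) (SIdx.X 1)) • b (SIdx.X 1) + (((3 : ℂ)/2) * (b.repr (φ (b (SIdx.X 1)))) (SIdx.Y 0)) • b (SIdx.Y 0) + (((-1 : ℂ)/2) * (b.repr (φ (b (SIdx.H)))) (SIdx.F) + ((3 : ℂ)/2) * (b.repr (φ (b (SIdx.X 1)))) (SIdx.Y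 1)) • b (SIdx.Y 1) + ((1 : ℂ) * (b.repr (φ (b (SIdx.X 1)))) (SIdx.S 0 1 h01)) • b (SIdx.S 0 1 h01) = (0 : L) := by
      linear_combination (norm := module) p4
    obtain ⟨q4_0, q4_1, q4_2, q4_3, q4_4, q4_5, q4_6, q4_7, q4_8⟩ := coeff_zero b _ _ _ _ _ _ _ _ _ P4
    have p5 := hφ (b (SIdx.H)) (b (SIdx.Y 0))
    rw [Thy hb, map_neg] at p5
    rw [hxH, hxY0] at p5
    simp [Tef hb, Tfe hb, The hb, Teh hb, Tfh hb, Thf hb, Txy hb, Tyx hb, Txx hb, Tyy hb, Thx hb, Txh hb, Thy hb, Tyh hb, Tey hb, Tye hb, Tex hb, Txe hb, Tfx hb, Txf hb, Tfy hb, Tyf hb, Tzu hb, Tuz hb, Tsx hb, Txs hb, Tsy hb, Tys hb, Tss hb, Tes hb, Tse hb, Tfs hb, Tsf hb, Ths hb, Tsh hb, lie_self, add_lie, smul_lie, lie_add, lie_smul, sub_lie, lie_sub, neg_lie, lie_neg, smul_add, smul_sub, smul_neg, neg_smul, smul_smul, smul_zero, zero_smul, lie_zero, zero_lie, kd] at 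p5
    have P5 : ((-2 : ℂ) * (b.repr (φ (b (SIdx.Y 0)))) (SIdx.E)) • b (SIdx.E) + ((0 : ℂ)) • b (SIdx.F) + ((-1 : ℂ) * (b.repr (φ (b (SIdx.Y 0)))) (SIdx.H)) • b (SIdx.H) + (((-1 : ℂ)/2) * (b.repr (φ (b (SIdx.H)))) (SIdx.X 0) + (-1 : ℂ) * (b.repr (φ (b (SIdx.Y 0)))) (SIdx.Z)) • b (SIdx.Z) + (((-1 : ℂ)/2) * (b.repr (φ (b (SIdx.H)))) (SIdx.E) + ((-3 : ℂ)/2) * (b.repr (φ (b (SIdx.Y 0)))) (SIdx.X 0)) • b (SIdx.X 0) + (((-3 : ℂ)/2) * (b.repr (φ (b (SIdx.Y 0)))) (SIdx.X 1)) • b (SIdx.X 1) + (((1 : ℂ)/2) * (b.repr (φ (b (SIdx.H)))) (SIdx.H) + ((-1 : ℂ)/2) * (b.repr (φ (b (SIdx.Y 0)))) (SIdx.Y 0)) • b (SIdx.Y 0) + (((1 : ℂ)/2) * (b.repr (φ (b (SIdx.H)))) (SIdx.S 0 1 h01) + ((-1 : ℂ)/2) * (b.repr (φ (b (SIdx.Y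 0)))) (SIdx.Y 1)) • b (SIdx.Y 1) + ((-1 : ℂ) * (b.repr (φ (b (SIdx.Y 0)))) (SIdx.S 0 1 h01)) • b (SIdx.S 0 1 h01) = (0 : L) := by
      linear_combination (norm := module) p5
    obtain ⟨q5_0, q5_1, q5_2, q5_3, q5_4, q5_5, q5_6, q5_7, q5_8⟩ := coeff_zero b _ _ _ _ _ _ _ _ _ P5
    have p6 := hφ (b (SIdx.H)) (b (SIdx.Y 1))
    rw [Thy hb, map_neg] at p6
    rw [hxH, hxY1] at p6
    simp [Tef hb, Tfe hb, The hb, Teh hb, Tfh hb, Thf hb, Txy hb, Tyx hb, Txx hb, Tyy hb, Thx hb, Txh hb, Thy hb, Tyh hb, Tey hb, Tye hb, Tex hb, Txe hb, Tfx hb, Txf hb, Tfy hb, Tyf hb, Tzu hb, Tuz hb, Tsx hb, Txs hb, Tsy hb, Tys hb, Tss hb, Tes hb, Tse hb, Tfs hb, Tsf hb, Ths hb, Tsh hb, lie_self, add_lie, smul_lie, lie_add, lie_smul, sub_lie, lie_sub, neg_lie, lie_neg, smul_add, smul_sub, smul_neg, neg_smul, smul_smul, smul_zero, zero_smul, lie_zero,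 zero_lie, kd] at p6
    have P6 : ((-2 : ℂ) * (b.repr (φ (b (SIdx.Y 1)))) (SIdx.E)) • b (SIdx.E) + ((0 : ℂ)) • b (SIdx.F) + ((-1 : ℂ) * (b.repr (φ (b (SIdx.Y 1)))) (SIdx.H)) • b (SIdx.H) + (((-1 : ℂ)/2) * (b.repr (φ (b (SIdx.H)))) (SIdx.X 1) + (-1 : ℂ) * (b.repr (φ (b (SIdx.Y 1)))) (SIdx.Z)) • b (SIdx.Z) + (((-3 : ℂ)/2) * (b.repr (φ (b (SIdx.Y 1)))) (SIdx.X 0)) • b (SIdx.X 0) + (((-1 : ℂ)/2) * (b.repr (φ (b (SIdx.H)))) (SIdx.E) + ((-3 : ℂ)/2) * (b.repr (φ (b (SIdx.Y 1)))) (SIdx.X 1)) • b (SIdx.X 1) + (((-1 : ℂ)/2) * (b.repr (φ (b (SIdx.H)))) (SIdx.S 0 1 h01) + ((-1 : ℂ)/2) * (b.repr (φ (b (SIdx.Y 1)))) (SIdx.Y 0)) • b (SIdx.Y 0) + (((1 : ℂ)/2) * (b.repr (φ (b (SIdx.H)))) (SIdx.H) + ((-1 : ℂ)/2) * (b.repr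 (φ (b (SIdx.Y 1)))) (SIdx.Y 1)) • b (SIdx.Y 1) + ((-1 : ℂ) * (b.repr (φ (b (SIdx.Y 1)))) (SIdx.S 0 1 h01)) • b (SIdx.S 0 1 h01) = (0 : L) := by
      linear_combination (norm := module) p6
    obtain ⟨q6_0, q6_1, q6_2, q6_3, q6_4, q6_5, q6_6, q6_7, q6_8⟩ := coeff_zero b _ _ _ _ _ _ _ _ _ P6
    have p7 := hφ (b (SIdx.F)) (b (SIdx.X 0))
    rw [Tfx hb] at p7
    rw [hxF, hxX0, hxY0] at p7
    simp [Tef hb, Tfe hb, The hb, Teh hb, Tfh hb, Thf hb, Txy hb, Tyx hb, Txx hb, Tyy hb, Thx hb, Txh hb, Thy hb, Tyh hb, Tey hb, Tye hb, Tex hb, Txe hb, Tfx hb, Txf hb, Tfy hb, Tyf hb, Tzu hb, Tuz hb, Tsx hb, Txs hb, Tsy hb, Tys hb, Tss hb, Tes hb, Tse hb, Tfs hb, Tsf hb, Ths hb, Tsh hb, lie_self, add_lie, smul_lie, lie_add, lie_smul, sub_lie, lie_sub, neg_lie, lie_neg, smul_add, smul_sub, smul_neg, neg_smul, smul_smul,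 smul_zero, zero_smul, lie_zero, zero_lie, kd] at p7
    have P7 : ((1 : ℂ) * (b.repr (φ (b (SIdx.Y 0)))) (SIdx.E)) • b (SIdx.E) + ((-1 : ℂ) * (b.repr (φ (b (SIdx.X 0)))) (SIdx.H) + (1 : ℂ) * (b.repr (φ (b (SIdx.Y 0)))) (SIdx.F)) • b (SIdx.F) + (((1 : ℂ)/2) * (b.repr (φ (b (SIdx.X 0)))) (SIdx.E) + (1 : ℂ) * (b.repr (φ (b (SIdx.Y 0)))) (SIdx.H)) • b (SIdx.H) + (((1 : ℂ)/2) * (b.repr (φ (b (SIdx.F)))) (SIdx.Y 0) + (1 : ℂ) * (b.repr (φ (b (SIdx.Y 0)))) (SIdx.Z)) • b (SIdx.Z) + (((-1 : ℂ)/2) * (b.repr (φ (b (SIdx.F)))) (SIdx.H) + (1 : ℂ) * (b.repr (φ (b (SIdx.Y 0)))) (SIdx.X 0)) • b (SIdx.X 0) + (((1 : ℂ)/2) * (b.repr (φ (b (SIdx.F)))) (SIdx.S 0 1 h01) + (1 : ℂ) * (b.repr (φ (b (SIdx.Y 0)))) (SIdx.X 1)) • b (SIdx.X 1) + (((-1 :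 ℂ)/2) * (b.repr (φ (b (SIdx.F)))) (SIdx.F) + ((-1 : ℂ)/2) * (b.repr (φ (b (SIdx.X 0)))) (SIdx.X 0) + (1 : ℂ) * (b.repr (φ (b (SIdx.Y 0)))) (SIdx.Y 0)) • b (SIdx.Y 0) + (((-1 : ℂ)/2) * (b.repr (φ (b (SIdx.X 0)))) (SIdx.X 1) + (1 : ℂ) * (b.repr (φ (b (SIdx.Y 0)))) (SIdx.Y 1)) • b (SIdx.Y 1) + ((1 : ℂ) * (b.repr (φ (b (SIdx.Y 0)))) (SIdx.S 0 1 h01)) • b (SIdx.S 0 1 h01) = (0 : L) := by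
      linear_combination (norm := module) p7
    obtain ⟨q7_0, q7_1, q7_2, q7_3, q7_4, q7_5, q7_6, q7_7, q7_8⟩ := coeff_zero b _ _ _ _ _ _ _ _ _ P7
    have p8 := hφ (b (SIdx.F)) (b (SIdx.X 1))
    rw [Tfx hb] at p8
    rw [hxF, hxX1, hxY1] at p8
    simp [Tef hb, Tfe hb, The hb, Teh hb, Tfh hb, Thf hb, Txy hb, Tyx hb, Txx hb, Tyy hb, Thx hb, Txh hb, Thy hb, Tyh hb, Tey hb, Tye hb, Tex hb, Txe hb, Tfx hb, Txf hb, Tfy hb, Tyf hb, Tzu hb, Tuz hb, Tsx hb, Txs hb, Tsy hb, Tys hb, Tss hb, Tes hb, Tse hb, Tfs hb, Tsf hb, Ths hb, Tsh hb, lie_self, add_lie, smul_lie, lie_add, lie_smul, sub_lie, lie_sub, neg_lie, lie_neg, smul_add, smul_sub, smul_neg, neg_smul, smul_smul, smul_zero, zero_smul, lie_zero, zero_lie, kd] at p8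
    have P8 : ((1 : ℂ) * (b.repr (φ (b (SIdx.Y 1)))) (SIdx.E)) • b (SIdx.E) + ((-1 : ℂ) * (b.repr (φ (b (SIdx.X 1)))) (SIdx.H) + (1 : ℂ) * (b.repr (φ (b (SIdx.Y 1)))) (SIdx.F)) • b (SIdx.F) + (((1 : ℂ)/2) * (b.repr (φ (b (SIdx.X 1)))) (SIdx.E) + (1 : ℂ) * (b.repr (φ (b (SIdx.Y 1)))) (SIdx.H)) • b (SIdx.H) + (((1 : ℂ)/2) * (b.repr (φ (b (SIdx.F)))) (SIdx.Y 1) + (1 : ℂ) * (b.repr (φ (b (SIdx.Y 1)))) (SIdx.Z)) • b (SIdx.Z) + (((-1 : ℂ)/2) * (b.repr (φ (b (SIdx.F)))) (SIdx.S 0 1 h01) + (1 : ℂ) * (b.repr (φ (b (SIdx.Y 1)))) (SIdx.X 0)) • b (SIdx.X 0) + (((-1 : ℂ)/2) * (b.repr (φ (b (SIdx.F)))) (SIdx.H) + (1 : ℂ) * (b.repr (φ (b (SIdx.Y 1)))) (SIdx.X 1)) • b (SIdx.X 1) + (((-1 : ℂ)/2) * (b.repr (φ (b (SIdx.X 1))))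 (SIdx.X 0) + (1 : ℂ) * (b.repr (φ (b (SIdx.Y 1)))) (SIdx.Y 0)) • b (SIdx.Y 0) + (((-1 : ℂ)/2) * (b.repr (φ (b (SIdx.F)))) (SIdx.F) + ((-1 : ℂ)/2) * (b.repr (φ (b (SIdx.X 1)))) (SIdx.X 1) + (1 : ℂ) * (b.repr (φ (b (SIdx.Y 1)))) (SIdx.Y 1)) • b (SIdx.Y 1) + ((1 : ℂ) * (b.repr (φ (b (SIdx.Y 1)))) (SIdx.S 0 1 h01)) • b (SIdx.S 0 1 h01) = (0 : L) := by
      linear_combination (norm := module) p8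
    obtain ⟨q8_0, q8_1, q8_2, q8_3, q8_4, q8_5, q8_6, q8_7, q8_8⟩ := coeff_zero b _ _ _ _ _ _ _ _ _ P8
    have p9 := hφ (b (SIdx.E)) (b (SIdx.Y 0))
    rw [Tey hb] at p9
    rw [hxE, hxY0, hxX0] at p9
    simp [Tef hb, Tfe hb, The hb, Teh hb, Tfh hb, Thf hb, Txy hb, Tyx hb, Txx hb, Tyy hb, Thx hb, Txh hb, Thy hb, Tyh hb, Tey hb, Tye hb, Tex hb, Txe hb, Tfx hb, Txf hb, Tfy hb, Tyf hb, Tzu hb, Tuz hb, Tsx hb, Txs hb, Tsy hb, Tys hb, Tss hb, Tes hb, Tse hb, Tfs hb, Tsf hb, Ths hb, Tsh hb, lie_self, add_lie, smul_lie, lie_add, lie_smul, sub_lie, lie_sub, neg_lie, lie_neg, smul_add, smul_sub, smul_neg, neg_smul, smul_smul, smul_zero, zero_smul, lie_zero, zero_lie, kd] at p9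
    have P9 : ((1 : ℂ) * (b.repr (φ (b (SIdx.X 0)))) (SIdx.E) + (1 : ℂ) * (b.repr (φ (b (SIdx.Y 0)))) (SIdx.H)) • b (SIdx.E) + ((1 : ℂ) * (b.repr (φ (b (SIdx.X 0)))) (SIdx.F)) • b (SIdx.F) + ((1 : ℂ) * (b.repr (φ (b (SIdx.X 0)))) (SIdx.H) + ((-1 : ℂ)/2) * (b.repr (φ (b (SIdx.Y 0)))) (SIdx.F)) • b (SIdx.H) + (((-1 : ℂ)/2) * (b.repr (φ (b (SIdx.E)))) (SIdx.X 0) + (1 : ℂ) * (b.repr (φ (b (SIdx.X 0)))) (SIdx.Z)) • b (SIdx.Z) + (((-1 : ℂ)/2) * (b.repr (φ (b (SIdx.E)))) (SIdx.E) + (1 : ℂ) * (b.repr (φ (b (SIdx.X 0)))) (SIdx.X 0) + ((-1 : ℂ)/2) * (b.repr (φ (b (SIdx.Y 0)))) (SIdx.Y 0)) • b (SIdx.X 0) + ((1 : ℂ) * (b.repr (φ (b (SIdx.X 0)))) (SIdx.X 1) + ((-1 : ℂ)/2) * (b.repr (φ (b (SIdx.Y 0)))) (SIdx.Y 1)) •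 b (SIdx.X 1) + (((1 : ℂ)/2) * (b.repr (φ (b (SIdx.E)))) (SIdx.H) + (1 : ℂ) * (b.repr (φ (b (SIdx.X 0)))) (SIdx.Y 0)) • b (SIdx.Y 0) + (((1 : ℂ)/2) * (b.repr (φ (b (SIdx.E)))) (SIdx.S 0 1 h01) + (1 : ℂ) * (b.repr (φ (b (SIdx.X 0)))) (SIdx.Y 1)) • b (SIdx.Y 1) + ((1 : ℂ) * (b.repr (φ (b (SIdx.X 0)))) (SIdx.S 0 1 h01)) • b (SIdx.S 0 1 h01) = (0 : L) := by
      linear_combination (norm := module) p9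
    obtain ⟨q9_0, q9_1, q9_2, q9_3, q9_4, q9_5, q9_6, q9_7, q9_8⟩ := coeff_zero b _ _ _ _ _ _ _ _ _ P9
    have p10 := hφ (b (SIdx.E)) (b (SIdx.Y 1))
    rw [Tey hb] at p10
    rw [hxE, hxY1, hxX1] at p10
    simp [Tef hb, Tfe hb, The hb, Teh hb, Tfh hb, Thf hb, Txy hb, Tyx hb, Txx hb, Tyy hb, Thx hb, Txh hb, Thy hb, Tyh hb, Tey hb, Tye hb, Tex hb, Txe hb, Tfx hb, Txf hb, Tfy hb, Tyf hb, Tzu hb, Tuz hb, Tsx hb, Txs hb, Tsy hb, Tys hb, Tss hb, Tes hb, Tse hb, Tfs hb, Tsf hb, Ths hb, Tsh hb, lie_self, add_lie, smul_lie, lie_add, lie_smul, sub_lie, lie_sub, neg_lie, lie_neg, smul_add, smul_sub, smul_neg, neg_smul, smul_smul, smul_zero, zero_smul, lie_zero, zero_lie, kd] at p10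
    have P10 : ((1 : ℂ) * (b.repr (φ (b (SIdx.X 1)))) (SIdx.E) + (1 : ℂ) * (b.repr (φ (b (SIdx.Y 1)))) (SIdx.H)) • b (SIdx.E) + ((1 : ℂ) * (b.repr (φ (b (SIdx.X 1)))) (SIdx.F)) • b (SIdx.F) + ((1 : ℂ) * (b.repr (φ (b (SIdx.X 1)))) (SIdx.H) + ((-1 : ℂ)/2) * (b.repr (φ (b (SIdx.Y 1)))) (SIdx.F)) • b (SIdx.H) + (((-1 : ℂ)/2) * (b.repr (φ (b (SIdx.E)))) (SIdx.X 1) + (1 : ℂ) * (b.repr (φ (b (SIdx.X 1)))) (SIdx.Z)) • b (SIdx.Z) + ((1 : ℂ) * (b.repr (φ (b (SIdx.X 1)))) (SIdx.X 0) + ((-1 : ℂ)/2) * (b.repr (φ (b (SIdx.Y 1)))) (SIdx.Y 0)) • b (SIdx.X 0) + (((-1 : ℂ)/2) * (b.repr (φ (b (SIdx.E)))) (SIdx.E) + (1 : ℂ) * (b.repr (φ (b (SIdx.X 1)))) (SIdx.X 1) + ((-1 : ℂ)/2) * (b.repr (φ (b (SIdx.Y 1)))) (SIdx.Y 1)) •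 b (SIdx.X 1) + (((-1 : ℂ)/2) * (b.repr (φ (b (SIdx.E)))) (SIdx.S 0 1 h01) + (1 : ℂ) * (b.repr (φ (b (SIdx.X 1)))) (SIdx.Y 0)) • b (SIdx.Y 0) + (((1 : ℂ)/2) * (b.repr (φ (b (SIdx.E)))) (SIdx.H) + (1 : ℂ) * (b.repr (φ (b (SIdx.X 1)))) (SIdx.Y 1)) • b (SIdx.Y 1) + ((1 : ℂ) * (b.repr (φ (b (SIdx.X 1)))) (SIdx.S 0 1 h01)) • b (SIdx.S 0 1 h01) = (0 : L) := by
      linear_combination (norm := module) p10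
    obtain ⟨q10_0, q10_1, q10_2, q10_3, q10_4, q10_5, q10_6, q10_7, q10_8⟩ := coeff_zero b _ _ _ _ _ _ _ _ _ P10
    have p11 := hφ (b (SIdx.X 0)) (b (SIdx.Y 0))
    rw [Txy hb, show kd (0 : Fin 2) (0 : Fin 2) = 1 by simp [kd], one_smul] at p11
    rw [hxX0, hxY0, hxZ] at p11
    simp [Tef hb, Tfe hb, The hb, Teh hb, Tfh hb, Thf hb, Txy hb, Tyx hb, Txx hb, Tyy hb, Thx hb, Txh hb, Thy hb, Tyh hb, Tey hb, Tye hb, Tex hb, Txe hb, Tfx hb, Txf hb, Tfy hb, Tyf hb, Tzu hb, Tuz hb, Tsx hb, Txs hb, Tsy hb, Tys hb, Tss hb, Tes hb, Tse hb, Tfs hb, Tsf hb, Ths hb, Tsh hb, lie_self, add_lie, smul_lie, lie_add, lie_smul, sub_lie, lie_sub, neg_lie, lie_neg, smul_add, smul_sub, smul_neg, neg_smul, smul_smul, smul_zero, zero_smul, lie_zero, zero_lie, kd] at p11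
    have P11 : ((1 : ℂ) * (b.repr (φ (b (SIdx.Z)))) (SIdx.E)) • b (SIdx.E) + ((1 : ℂ) * (b.repr (φ (b (SIdx.Z)))) (SIdx.F)) • b (SIdx.F) + ((1 : ℂ) * (b.repr (φ (b (SIdx.Z)))) (SIdx.H)) • b (SIdx.H) + ((1 : ℂ) * (b.repr (φ (b (SIdx.Z)))) (SIdx.Z) + ((-1 : ℂ)/2) * (b.repr (φ (b (SIdx.X 0)))) (SIdx.X 0) + ((-1 : ℂ)/2) * (b.repr (φ (b (SIdx.Y 0)))) (SIdx.Y 0)) • b (SIdx.Z) + ((1 : ℂ) * (b.repr (φ (b (SIdx.Z)))) (SIdx.X 0) + ((-1 : ℂ)/2) * (b.repr (φ (b (SIdx.X 0)))) (SIdx.E) + ((1 : ℂ)/2) * (b.repr (φ (b (SIdx.Y 0)))) (SIdx.H)) • b (SIdx.X 0) + ((1 : ℂ) * (b.repr (φ (b (SIdx.Z)))) (SIdx.X 1) + ((-1 : ℂ)/2) * (b.repr (φ (b (SIdx.Y 0)))) (SIdx.S 0 1 h01)) • b (SIdx.X 1) + ((1 : ℂ) * (b.repr (φ (b (SIdx.Z))))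 (SIdx.Y 0) + ((1 : ℂ)/2) * (b.repr (φ (b (SIdx.X 0)))) (SIdx.H) + ((1 : ℂ)/2) * (b.repr (φ (b (SIdx.Y 0)))) (SIdx.F)) • b (SIdx.Y 0) + ((1 : ℂ) * (b.repr (φ (b (SIdx.Z)))) (SIdx.Y 1) + ((1 : ℂ)/2) * (b.repr (φ (b (SIdx.X 0)))) (SIdx.S 0 1 h01)) • b (SIdx.Y 1) + ((1 : ℂ) * (b.repr (φ (b (SIdx.Z)))) (SIdx.S 0 1 h01)) • b (SIdx.S 0 1 h01) = (0 : L) := by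
      linear_combination (norm := module) p11
    obtain ⟨q11_0, q11_1, q11_2, q11_3, q11_4, q11_5, q11_6, q11_7, q11_8⟩ := coeff_zero b _ _ _ _ _ _ _ _ _ P11
    have p12 := hφ (b (SIdx.S 0 1 h01)) (b (SIdx.X 0))
    rw [Tsx hb, map_sub, map_smul, map_smul] at p12
    rw [hxS, hxX0, hxX1] at p12
    simp [Tef hb, Tfe hb, The hb, Teh hb, Tfh hb, Thf hb, Txy hb, Tyx hb, Txx hb, Tyy hb, Thx hb, Txh hb, Thy hb, Tyh hb, Tey hb, Tye hb, Tex hb, Txe hb, Tfx hb, Txf hb, Tfy hb, Tyf hb, Tzu hb, Tuz hb, Tsx hb, Txs hb, Tsy hb, Tys hb, Tss hb, Tes hb, Tse hb, Tfs hb, Tsf hb, Ths hb, Tsh hb, lie_self, add_lie, smul_lie, lie_add, lie_smul, sub_lie, lie_sub, neg_lie, lie_neg, smul_add, smul_sub, smul_neg, neg_smul, smul_smul, smul_zero, zero_smul, lie_zero, zero_lie, kd] at p12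
    have P12 : ((-1 : ℂ) * (b.repr (φ (b (SIdx.X 1)))) (SIdx.E)) • b (SIdx.E) + ((-1 : ℂ) * (b.repr (φ (b (SIdx.X 1)))) (SIdx.F)) • b (SIdx.F) + ((-1 : ℂ) * (b.repr (φ (b (SIdx.X 1)))) (SIdx.H)) • b (SIdx.H) + ((-1 : ℂ) * (b.repr (φ (b (SIdx.X 1)))) (SIdx.Z) + ((1 : ℂ)/2) * (b.repr (φ (b (SIdx.S 0 1 h01)))) (SIdx.Y 0)) • b (SIdx.Z) + (((-1 : ℂ)/2) * (b.repr (φ (b (SIdx.X 0)))) (SIdx.X 1) + (-1 : ℂ) * (b.repr (φ (b (SIdx.X 1)))) (SIdx.X 0) + ((-1 : ℂ)/2) * (b.repr (φ (b (SIdx.S 0 1 h01)))) (SIdx.H)) • b (SIdx.X 0) + (((1 : ℂ)/2) * (b.repr (φ (b (SIdx.X 0)))) (SIdx.X 0) + (-1 : ℂ) * (b.repr (φ (b (SIdx.X 1)))) (SIdx.X 1) + ((1 : ℂ)/2) * (b.repr (φ (b (SIdx.S 0 1 h01)))) (SIdx.S 0 1 h01)) • b (SIdx.X 1) + (((-1 :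 ℂ)/2) * (b.repr (φ (b (SIdx.X 0)))) (SIdx.Y 1) + (-1 : ℂ) * (b.repr (φ (b (SIdx.X 1)))) (SIdx.Y 0) + ((-1 : ℂ)/2) * (b.repr (φ (b (SIdx.S 0 1 h01)))) (SIdx.F)) • b (SIdx.Y 0) + (((1 : ℂ)/2) * (b.repr (φ (b (SIdx.X 0)))) (SIdx.Y 0) + (-1 : ℂ) * (b.repr (φ (b (SIdx.X 1)))) (SIdx.Y 1)) • b (SIdx.Y 1) + ((-1 : ℂ) * (b.repr (φ (b (SIdx.X 1)))) (SIdx.S 0 1 h01)) • b (SIdx.S 0 1 h01) = (0 : L) := by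
      linear_combination (norm := module) p12
    obtain ⟨q12_0, q12_1, q12_2, q12_3, q12_4, q12_5, q12_6, q12_7, q12_8⟩ := coeff_zero b _ _ _ _ _ _ _ _ _ P12
    have p13 := hφ (b (SIdx.S 0 1 h01)) (b (SIdx.X 1))
    rw [Tsx hb, map_sub, map_smul, map_smul] at p13
    rw [hxS, hxX1, hxX0] at p13
    simp [Tef hb, Tfe hb, The hb, Teh hb, Tfh hb, Thf hb, Txy hb, Tyx hb, Txx hb, Tyy hb, Thx hb, Txh hb, Thy hb, Tyh hb, Tey hb, Tye hb, Tex hb, Txe hb, Tfx hb, Txf hb, Tfy hb, Tyf hb, Tzu hb, Tuz hb, Tsx hb, Txs hb, Tsy hb, Tys hb, Tss hb, Tes hb, Tse hb, Tfs hb, Tsf hb, Ths hb, Tsh hb, lie_self, add_lie, smul_lie, lie_add, lie_smul, sub_lie, lie_sub, neg_lie, lie_neg, smul_add, smul_sub, smul_neg, neg_smul, smul_smul, smul_zero, zero_smul, lie_zero, zero_lie, kd] at p13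
    have P13 : ((1 : ℂ) * (b.repr (φ (b (SIdx.X 0)))) (SIdx.E)) • b (SIdx.E) + ((1 : ℂ) * (b.repr (φ (b (SIdx.X 0)))) (SIdx.F)) • b (SIdx.F) + ((1 : ℂ) * (b.repr (φ (b (SIdx.X 0)))) (SIdx.H)) • b (SIdx.H) + ((1 : ℂ) * (b.repr (φ (b (SIdx.X 0)))) (SIdx.Z) + ((1 : ℂ)/2) * (b.repr (φ (b (SIdx.S 0 1 h01)))) (SIdx.Y 1)) • b (SIdx.Z) + ((1 : ℂ) * (b.repr (φ (b (SIdx.X 0)))) (SIdx.X 0) + ((-1 : ℂ)/2) * (b.repr (φ (b (SIdx.X 1)))) (SIdx.X 1) + ((-1 : ℂ)/2) * (b.repr (φ (b (SIdx.S 0 1 h01)))) (SIdx.S 0 1 h01)) • b (SIdx.X 0) + ((1 : ℂ) * (b.repr (φ (b (SIdx.X 0)))) (SIdx.X 1) + ((1 : ℂ)/2) * (b.repr (φ (b (SIdx.X 1)))) (SIdx.X 0) + ((-1 : ℂ)/2) * (b.repr (φ (b (SIdx.S 0 1 h01)))) (SIdx.H)) • b (SIdx.X 1) + ((1 : ℂ)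 * (b.repr (φ (b (SIdx.X 0)))) (SIdx.Y 0) + ((-1 : ℂ)/2) * (b.repr (φ (b (SIdx.X 1)))) (SIdx.Y 1)) • b (SIdx.Y 0) + ((1 : ℂ) * (b.repr (φ (b (SIdx.X 0)))) (SIdx.Y 1) + ((1 : ℂ)/2) * (b.repr (φ (b (SIdx.X 1)))) (SIdx.Y 0) + ((-1 : ℂ)/2) * (b.repr (φ (b (SIdx.S 0 1 h01)))) (SIdx.F)) • b (SIdx.Y 1) + ((1 : ℂ) * (b.repr (φ (b (SIdx.X 0)))) (SIdx.S 0 1 h01)) • b (SIdx.S 0 1 h01) = (0 : L) := by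
      linear_combination (norm := module) p13
    obtain ⟨q13_0, q13_1, q13_2, q13_3, q13_4, q13_5, q13_6, q13_7, q13_8⟩ := coeff_zero b _ _ _ _ _ _ _ _ _ P13
    have p14 := hφ (b (SIdx.S 0 1 h01)) (b (SIdx.Y 0))
    rw [Tsy hb, map_sub, map_smul, map_smul] at p14
    rw [hxS, hxY0, hxY1] at p14
    simp [Tef hb, Tfe hb, The hb, Teh hb, Tfh hb, Thf hb, Txy hb, Tyx hb, Txx hb, Tyy hb, Thx hb, Txh hb, Thy hb, Tyh hb, Tey hb, Tye hb, Tex hb, Txe hb, Tfx hb, Txf hb, Tfy hb, Tyf hb, Tzu hb, Tuz hb, Tsx hb, Txs hb, Tsy hb, Tys hb, Tss hb, Tes hb, Tse hb, Tfs hb, Tsf hb, Ths hb, Tsh hb, lie_self, add_lie, smul_lie, lie_add, lie_smul, sub_lie, lie_sub, neg_lie, lie_neg, smul_add, smul_sub, smul_neg, neg_smul, smul_smul, smul_zero, zero_smul, lie_zero, zero_lie, kd] at p14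
    have P14 : ((-1 : ℂ) * (b.repr (φ (b (SIdx.Y 1)))) (SIdx.E)) • b (SIdx.E) + ((-1 : ℂ) * (b.repr (φ (b (SIdx.Y 1)))) (SIdx.F)) • b (SIdx.F) + ((-1 : ℂ) * (b.repr (φ (b (SIdx.Y 1)))) (SIdx.H)) • b (SIdx.H) + ((-1 : ℂ) * (b.repr (φ (b (SIdx.Y 1)))) (SIdx.Z) + ((-1 : ℂ)/2) * (b.repr (φ (b (SIdx.S 0 1 h01)))) (SIdx.X 0)) • b (SIdx.Z) + (((-1 : ℂ)/2) * (b.repr (φ (b (SIdx.Y 0)))) (SIdx.X 1) + (-1 : ℂ) * (b.repr (φ (b (SIdx.Y 1)))) (SIdx.X 0) + ((-1 : ℂ)/2) * (b.repr (φ (b (SIdx.S 0 1 h01)))) (SIdx.E)) • b (SIdx.X 0) + (((1 : ℂ)/2) * (b.repr (φ (b (SIdx.Y 0)))) (SIdx.X 0) + (-1 : ℂ) * (b.repr (φ (b (SIdx.Y 1)))) (SIdx.X 1)) • b (SIdx.X 1) + (((-1 : ℂ)/2) * (b.repr (φ (b (SIdx.Y 0)))) (SIdx.Y 1) + (-1 :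 ℂ) * (b.repr (φ (b (SIdx.Y 1)))) (SIdx.Y 0) + ((1 : ℂ)/2) * (b.repr (φ (b (SIdx.S 0 1 h01)))) (SIdx.H)) • b (SIdx.Y 0) + (((1 : ℂ)/2) * (b.repr (φ (b (SIdx.Y 0)))) (SIdx.Y 0) + (-1 : ℂ) * (b.repr (φ (b (SIdx.Y 1)))) (SIdx.Y 1) + ((1 : ℂ)/2) * (b.repr (φ (b (SIdx.S 0 1 h01)))) (SIdx.S 0 1 h01)) • b (SIdx.Y 1) + ((-1 : ℂ) * (b.repr (φ (b (SIdx.Y 1)))) (SIdx.S 0 1 h01)) • b (SIdx.S 0 1 h01) = (0 : L) := by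
      linear_combination (norm := module) p14
    obtain ⟨q14_0, q14_1, q14_2, q14_3, q14_4, q14_5, q14_6, q14_7, q14_8⟩ := coeff_zero b _ _ _ _ _ _ _ _ _ P14
    have p15 := hφ (b (SIdx.S 0 1 h01)) (b (SIdx.Y 1))
    rw [Tsy hb, map_sub, map_smul, map_smul] at p15
    rw [hxS, hxY1, hxY0] at p15
    simp [Tef hb, Tfe hb, The hb, Teh hb, Tfh hb, Thf hb, Txy hb, Tyx hb, Txx hb, Tyy hb, Thx hb, Txh hb, Thy hb, Tyh hb, Tey hb, Tye hb, Tex hb, Txe hb, Tfx hb, Txf hb, Tfy hb, Tyf hb, Tzu hb, Tuz hb, Tsx hb, Txs hb, Tsy hb, Tys hb, Tss hb, Tes hb, Tse hb, Tfs hb, Tsf hb, Ths hb, Tsh hb, lie_self, add_lie, smul_lie, lie_add, lie_smul, sub_lie, lie_sub, neg_lie, lie_neg, smul_add, smul_sub, smul_neg, neg_smul, smul_smul, smul_zero, zero_smul, lie_zero, zero_lie, kd] at p15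
    have P15 : ((1 : ℂ) * (b.repr (φ (b (SIdx.Y 0)))) (SIdx.E)) • b (SIdx.E) + ((1 : ℂ) * (b.repr (φ (b (SIdx.Y 0)))) (SIdx.F)) • b (SIdx.F) + ((1 : ℂ) * (b.repr (φ (b (SIdx.Y 0)))) (SIdx.H)) • b (SIdx.H) + ((1 : ℂ) * (b.repr (φ (b (SIdx.Y 0)))) (SIdx.Z) + ((-1 : ℂ)/2) * (b.repr (φ (b (SIdx.S 0 1 h01)))) (SIdx.X 1)) • b (SIdx.Z) + ((1 : ℂ) * (b.repr (φ (b (SIdx.Y 0)))) (SIdx.X 0) + ((-1 : ℂ)/2) * (b.repr (φ (b (SIdx.Y 1)))) (SIdx.X 1)) • b (SIdx.X 0) + ((1 : ℂ) * (b.repr (φ (b (SIdx.Y 0)))) (SIdx.X 1) + ((1 : ℂ)/2) * (b.repr (φ (b (SIdx.Y 1)))) (SIdx.X 0) + ((-1 : ℂ)/2) * (b.repr (φ (b (SIdx.S 0 1 h01)))) (SIdx.E)) • b (SIdx.X 1) + ((1 : ℂ) * (b.repr (φ (b (SIdx.Y 0)))) (SIdx.Y 0) + ((-1 : ℂ)/2)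 * (b.repr (φ (b (SIdx.Y 1)))) (SIdx.Y 1) + ((-1 : ℂ)/2) * (b.repr (φ (b (SIdx.S 0 1 h01)))) (SIdx.S 0 1 h01)) • b (SIdx.Y 0) + ((1 : ℂ) * (b.repr (φ (b (SIdx.Y 0)))) (SIdx.Y 1) + ((1 : ℂ)/2) * (b.repr (φ (b (SIdx.Y 1)))) (SIdx.Y 0) + ((1 : ℂ)/2) * (b.repr (φ (b (SIdx.S 0 1 h01)))) (SIdx.H)) • b (SIdx.Y 1) + ((1 : ℂ) * (b.repr (φ (b (SIdx.Y 0)))) (SIdx.S 0 1 h01)) • b (SIdx.S 0 1 h01) = (0 : L) := by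
      linear_combination (norm := module) p15
    obtain ⟨q15_0, q15_1, q15_2, q15_3, q15_4, q15_5, q15_6, q15_7, q15_8⟩ := coeff_zero b _ _ _ _ _ _ _ _ _ P15
    have tEF : (b.repr (φ (b (SIdx.E)))) (SIdx.F) = 0 := by
      linear_combination ((1 : ℂ)/3) * q0_1
    have tEH : (b.repr (φ (b (SIdx.E)))) (SIdx.H) = 0 := by
      linear_combination ((2 : ℂ)/3) * q0_2 + ((-1 : ℂ)/3) * q2_1
    have tEZ : (b.repr (φ (b (SIdx.E)))) (SIdx.Z) = 0 := by
      linear_combination ((1 : ℂ)/2) * q0_3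
    have tEX0 : (b.repr (φ (b (SIdx.E)))) (SIdx.X 0) = 0 := by
      linear_combination ((4 : ℂ)/5) * q0_4 + ((-2 : ℂ)/5) * q2_6
    have tEX1 : (b.repr (φ (b (SIdx.E)))) (SIdx.X 1) = 0 := by
      linear_combination ((4 : ℂ)/5) * q0_5 + ((-2 : ℂ)/5) * q2_7
    have tEY0 : (b.repr (φ (b (SIdx.E)))) (SIdx.Y 0) = 0 := by
      linear_combination ((2 : ℂ)/5) * q0_6
    have tEY1 : (b.repr (φ (b (SIdx.E)))) (SIdx.Y 1) = 0 := by
      linear_combination ((2 : ℂ)/5) * q0_7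
    have tES : (b.repr (φ (b (SIdx.E)))) (SIdx.S 0 1 h01) = 0 := by
      linear_combination ((1 : ℂ)/2) * q0_8
    have tFE : (b.repr (φ (b (SIdx.F)))) (SIdx.E) = 0 := by
      linear_combination ((1 : ℂ)/3) * q1_0
    have tFF : (b.repr (φ (b (SIdx.F)))) (SIdx.F) = (b.repr (φ (b (SIdx.E)))) (SIdx.E) := by
      linear_combination (-1 : ℂ) * q0_0 + (1 : ℂ) * q1_1
    have tFH : (b.repr (φ (b (SIdx.F)))) (SIdx.H) = 0 := by
      linear_combination ((2 : ℂ)/3) * q1_2 + ((-1 : ℂ)/3) * q2_0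
    have tFZ : (b.repr (φ (b (SIdx.F)))) (SIdx.Z) = 0 := by
      linear_combination ((1 : ℂ)/2) * q1_3
    have tFX0 : (b.repr (φ (b (SIdx.F)))) (SIdx.X 0) = 0 := by
      linear_combination ((2 : ℂ)/5) * q1_4
    have tFX1 : (b.repr (φ (b (SIdx.F)))) (SIdx.X 1) = 0 := by
      linear_combination ((2 : ℂ)/5) * q1_5
    have tFY0 : (b.repr (φ (b (SIdx.F)))) (SIdx.Y 0) = 0 := by
      linear_combination ((4 : ℂ)/5) * q1_6 + ((2 : ℂ)/5) * q2_4
    have tFY1 : (b.repr (φ (b (SIdx.F)))) (SIdx.Y 1) = 0 := by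
      linear_combination ((4 : ℂ)/5) * q1_7 + ((2 : ℂ)/5) * q2_5
    have tFS : (b.repr (φ (b (SIdx.F)))) (SIdx.S 0 1 h01) = 0 := by
      linear_combination ((1 : ℂ)/2) * q1_8
    have tHE : (b.repr (φ (b (SIdx.H)))) (SIdx.E) = 0 := by
      linear_combination ((-2 : ℂ)/3) * q1_2 + ((4 : ℂ)/3) * q2_0
    have tHF : (b.repr (φ (b (SIdx.H)))) (SIdx.F) = 0 := by
      linear_combination ((-2 : ℂ)/3) * q0_2 + ((4 : ℂ)/3) * q2_1
    have tHH : (b.repr (φ (b (SIdx.H)))) (SIdx.H) = (b.repr (φ (b (SIdx.E)))) (SIdx.E) := by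
      linear_combination (-1 : ℂ) * q0_0
    have tHZ : (b.repr (φ (b (SIdx.H)))) (SIdx.Z) = 0 := by
      linear_combination (1 : ℂ) * q2_3
    have tHX0 : (b.repr (φ (b (SIdx.H)))) (SIdx.X 0) = 0 := by
      linear_combination ((2 : ℂ)/5) * q1_6 + ((6 : ℂ)/5) * q2_4
    have tHX1 : (b.repr (φ (b (SIdx.H)))) (SIdx.X 1) = 0 := by
      linear_combination ((2 : ℂ)/5) * q1_7 + ((6 : ℂ)/5) * q2_5
    have tHY0 : (b.repr (φ (b (SIdx.H)))) (SIdx.Y 0) = 0 := by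
      linear_combination ((-2 : ℂ)/5) * q0_4 + ((6 : ℂ)/5) * q2_6
    have tHY1 : (b.repr (φ (b (SIdx.H)))) (SIdx.Y 1) = 0 := by
      linear_combination ((-2 : ℂ)/5) * q0_5 + ((6 : ℂ)/5) * q2_7
    have tHS : (b.repr (φ (b (SIdx.H)))) (SIdx.S 0 1 h01) = 0 := by
      linear_combination (1 : ℂ) * q2_8
    have tZE : (b.repr (φ (b (SIdx.Z)))) (SIdx.E) = 0 := by
      linear_combination (1 : ℂ) * q11_0
    have tZF : (b.repr (φ (b (SIdx.Z)))) (SIdx.F) = 0 := by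
      linear_combination (1 : ℂ) * q11_1
    have tZH : (b.repr (φ (b (SIdx.Z)))) (SIdx.H) = 0 := by
      linear_combination (1 : ℂ) * q11_2
    have tZZ : (b.repr (φ (b (SIdx.Z)))) (SIdx.Z) = (b.repr (φ (b (SIdx.E)))) (SIdx.E) := by
      linear_combination (-1 : ℂ) * q0_0 + (1 : ℂ) * q3_4 + (-1 : ℂ) * q5_6 + (1 : ℂ) * q11_3
    have tZX0 : (b.repr (φ (b (SIdx.Z)))) (SIdx.X 0) = 0 := by
      linear_combination ((3 : ℂ)/2) * q5_2 + (1 : ℂ) * q7_2 + (1 : ℂ) * q11_4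
    have tZX1 : (b.repr (φ (b (SIdx.Z)))) (SIdx.X 1) = 0 := by
      linear_combination ((1 : ℂ)/2) * q7_8 + (1 : ℂ) * q11_5
    have tZY0 : (b.repr (φ (b (SIdx.Z)))) (SIdx.Y 0) = 0 := by
      linear_combination ((-3 : ℂ)/2) * q7_1 + (-2 : ℂ) * q9_2 + (1 : ℂ) * q11_6
    have tZY1 : (b.repr (φ (b (SIdx.Z)))) (SIdx.Y 1) = 0 := by
      linear_combination ((-1 : ℂ)/2) * q9_8 + (1 : ℂ) * q11_7
    have tZS : (b.repr (φ (b (SIdx.Z)))) (SIdx.S 0 1 h01) = 0 := by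
      linear_combination (1 : ℂ) * q11_8
    have tX0E : (b.repr (φ (b (SIdx.X 0)))) (SIdx.E) = 0 := by
      linear_combination (2 : ℂ) * q5_2 + (2 : ℂ) * q7_2
    have tX0F : (b.repr (φ (b (SIdx.X 0)))) (SIdx.F) = 0 := by
      linear_combination (1 : ℂ) * q9_1
    have tX0H : (b.repr (φ (b (SIdx.X 0)))) (SIdx.H) = 0 := by
      linear_combination (1 : ℂ) * q7_1 + (2 : ℂ) * q9_2
    have tX0Z : (b.repr (φ (b (SIdx.X 0)))) (SIdx.Z) = 0 := by
      linear_combination ((2 : ℂ)/5) * q0_4 + ((-1 : ℂ)/5) * q2_6 + (1 : ℂ) * q9_3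
    have tX0X0 : (b.repr (φ (b (SIdx.X 0)))) (SIdx.X 0) = (b.repr (φ (b (SIdx.E)))) (SIdx.E) := by
      linear_combination (-1 : ℂ) * q0_0 + (2 : ℂ) * q3_4
    have tX0X1 : (b.repr (φ (b (SIdx.X 0)))) (SIdx.X 1) = 0 := by
      linear_combination ((2 : ℂ)/3) * q7_7 + ((4 : ℂ)/3) * q9_5
    have tX0Y0 : (b.repr (φ (b (SIdx.X 0)))) (SIdx.Y 0) = 0 := by
      linear_combination ((-1 : ℂ)/3) * q0_2 + ((1 : ℂ)/6) * q2_1 + (1 : ℂ) * q9_6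
    have tX0Y1 : (b.repr (φ (b (SIdx.X 0)))) (SIdx.Y 1) = 0 := by
      linear_combination ((-1 : ℂ)/4) * q0_8 + (1 : ℂ) * q9_7
    have tX0S : (b.repr (φ (b (SIdx.X 0)))) (SIdx.S 0 1 h01) = 0 := by
      linear_combination (1 : ℂ) * q9_8
    have tX1E : (b.repr (φ (b (SIdx.X 1)))) (SIdx.E) = 0 := by
      linear_combination (2 : ℂ) * q6_2 + (2 : ℂ) * q8_2
    have tX1F : (b.repr (φ (b (SIdx.X 1)))) (SIdx.F) = 0 := by
      linear_combination ((1 : ℂ)/2) * q4_1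
    have tX1H : (b.repr (φ (b (SIdx.X 1)))) (SIdx.H) = 0 := by
      linear_combination (1 : ℂ) * q4_2
    have tX1Z : (b.repr (φ (b (SIdx.X 1)))) (SIdx.Z) = 0 := by
      linear_combination ((1 : ℂ)/5) * q0_5 + ((-3 : ℂ)/5) * q2_7 + (1 : ℂ) * q4_3
    have tX1X0 : (b.repr (φ (b (SIdx.X 1)))) (SIdx.X 0) = 0 := by
      linear_combination (1 : ℂ) * q2_8 + (2 : ℂ) * q4_4
    have tX1X1 : (b.repr (φ (b (SIdx.X 1)))) (SIdx.X 1) = (b.repr (φ (b (SIdx.E)))) (SIdx.E) := by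
      linear_combination (-1 : ℂ) * q0_0 + (2 : ℂ) * q4_5
    have tX1Y0 : (b.repr (φ (b (SIdx.X 1)))) (SIdx.Y 0) = 0 := by
      linear_combination ((2 : ℂ)/3) * q4_6
    have tX1Y1 : (b.repr (φ (b (SIdx.X 1)))) (SIdx.Y 1) = 0 := by
      linear_combination ((-2 : ℂ)/9) * q0_2 + ((4 : ℂ)/9) * q2_1 + ((2 : ℂ)/3) * q4_7
    have tX1S : (b.repr (φ (b (SIdx.X 1)))) (SIdx.S 0 1 h01) = 0 := by
      linear_combination (1 : ℂ) * q4_8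
    have tY0E : (b.repr (φ (b (SIdx.Y 0)))) (SIdx.E) = 0 := by
      linear_combination (1 : ℂ) * q7_0
    have tY0F : (b.repr (φ (b (SIdx.Y 0)))) (SIdx.F) = 0 := by
      linear_combination (2 : ℂ) * q7_1 + (2 : ℂ) * q9_2
    have tY0H : (b.repr (φ (b (SIdx.Y 0)))) (SIdx.H) = 0 := by
      linear_combination (-1 : ℂ) * q5_2
    have tY0Z : (b.repr (φ (b (SIdx.Y 0)))) (SIdx.Z) = 0 := by
      linear_combination ((-2 : ℂ)/5) * q1_6 + ((-1 : ℂ)/5) * q2_4 + (1 : ℂ) * q7_3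
    have tY0X0 : (b.repr (φ (b (SIdx.Y 0)))) (SIdx.X 0) = 0 := by
      linear_combination ((1 : ℂ)/3) * q1_2 + ((-1 : ℂ)/6) * q2_0 + (1 : ℂ) * q7_4
    have tY0X1 : (b.repr (φ (b (SIdx.Y 0)))) (SIdx.X 1) = 0 := by
      linear_combination ((-1 : ℂ)/4) * q1_8 + (1 : ℂ) * q7_5
    have tY0Y0 : (b.repr (φ (b (SIdx.Y 0)))) (SIdx.Y 0) = (b.repr (φ (b (SIdx.E)))) (SIdx.E) := by
      linear_combination (-1 : ℂ) * q0_0 + (-2 : ℂ) * q5_6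
    have tY0Y1 : (b.repr (φ (b (SIdx.Y 0)))) (SIdx.Y 1) = 0 := by
      linear_combination ((4 : ℂ)/3) * q7_7 + ((2 : ℂ)/3) * q9_5
    have tY0S : (b.repr (φ (b (SIdx.Y 0)))) (SIdx.S 0 1 h01) = 0 := by
      linear_combination (1 : ℂ) * q7_8
    have tY1E : (b.repr (φ (b (SIdx.Y 1)))) (SIdx.E) = 0 := by
      linear_combination ((-1 : ℂ)/2) * q6_0
    have tY1F : (b.repr (φ (b (SIdx.Y 1)))) (SIdx.F) = 0 := by
      linear_combination (1 : ℂ) * q4_2 + (1 : ℂ) * q8_1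
    have tY1H : (b.repr (φ (b (SIdx.Y 1)))) (SIdx.H) = 0 := by
      linear_combination (-1 : ℂ) * q6_2
    have tY1Z : (b.repr (φ (b (SIdx.Y 1)))) (SIdx.Z) = 0 := by
      linear_combination ((-1 : ℂ)/5) * q1_7 + ((-3 : ℂ)/5) * q2_5 + (-1 : ℂ) * q6_3
    have tY1X0 : (b.repr (φ (b (SIdx.Y 1)))) (SIdx.X 0) = 0 := by
      linear_combination ((-2 : ℂ)/3) * q6_4
    have tY1X1 : (b.repr (φ (b (SIdx.Y 1)))) (SIdx.X 1) = 0 := by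
      linear_combination ((2 : ℂ)/9) * q1_2 + ((-4 : ℂ)/9) * q2_0 + ((-2 : ℂ)/3) * q6_5
    have tY1Y0 : (b.repr (φ (b (SIdx.Y 1)))) (SIdx.Y 0) = 0 := by
      linear_combination ((1 : ℂ)/2) * q2_8 + (1 : ℂ) * q4_4 + (1 : ℂ) * q8_6
    have tY1Y1 : (b.repr (φ (b (SIdx.Y 1)))) (SIdx.Y 1) = (b.repr (φ (b (SIdx.E)))) (SIdx.E) := by
      linear_combination (-1 : ℂ) * q0_0 + (-2 : ℂ) * q6_7
    have tY1S : (b.repr (φ (b (SIdx.Y 1)))) (SIdx.S 0 1 h01) = 0 := by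
      linear_combination (-1 : ℂ) * q6_8
    have tSE : (b.repr (φ (b (SIdx.S 0 1 h01)))) (SIdx.E) = 0 := by
      linear_combination ((1 : ℂ)/4) * q1_8 + ((4 : ℂ)/3) * q6_4 + (-1 : ℂ) * q7_5 + (-2 : ℂ) * q14_4
    have tSF : (b.repr (φ (b (SIdx.S 0 1 h01)))) (SIdx.F) = 0 := by
      linear_combination ((1 : ℂ)/4) * q0_8 + ((-4 : ℂ)/3) * q4_6 + (-1 : ℂ) * q9_7 + (-2 : ℂ) * q12_6
    have tSH : (b.repr (φ (b (SIdx.S 0 1 h01)))) (SIdx.H) = 0 := by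
      linear_combination (-2 : ℂ) * q2_8 + (-4 : ℂ) * q4_4 + ((-2 : ℂ)/3) * q7_7 + ((-4 : ℂ)/3) * q9_5 + (-2 : ℂ) * q12_4
    have tSX0 : (b.repr (φ (b (SIdx.S 0 1 h01)))) (SIdx.X 0) = 0 := by
      linear_combination ((2 : ℂ)/5) * q1_7 + ((6 : ℂ)/5) * q2_5 + (2 : ℂ) * q6_3 + (-2 : ℂ) * q14_3
    have tSX1 : (b.repr (φ (b (SIdx.S 0 1 h01)))) (SIdx.X 1) = 0 := by
      linear_combination ((-4 : ℂ)/5) * q1_6 + ((-2 : ℂ)/5) * q2_4 + (2 : ℂ) * q7_3 + (-2 : ℂ) * q15_3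
    have tSY0 : (b.repr (φ (b (SIdx.S 0 1 h01)))) (SIdx.Y 0) = 0 := by
      linear_combination ((2 : ℂ)/5) * q0_5 + ((-6 : ℂ)/5) * q2_7 + (2 : ℂ) * q4_3 + (2 : ℂ) * q12_3
    have tSY1 : (b.repr (φ (b (SIdx.S 0 1 h01)))) (SIdx.Y 1) = 0 := by
      linear_combination ((-4 : ℂ)/5) * q0_4 + ((2 : ℂ)/5) * q2_6 + (-2 : ℂ) * q9_3 + (2 : ℂ) * q13_3
    have tSS : (b.repr (φ (b (SIdx.S 0 1 h01)))) (SIdx.S 0 1 h01) = (b.repr (φ (b (SIdx.E)))) (SIdx.E) := by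
      linear_combination (-1 : ℂ) * q0_0 + (-2 : ℂ) * q3_4 + (4 : ℂ) * q4_5 + (2 : ℂ) * q12_5
    refine ⟨(b.repr (φ (b (SIdx.E)))) (SIdx.E), (b.repr (φ (b (SIdx.S 0 1 h01)))) (SIdx.Z), ?_, ?_, ?_, ?_, ?_, ?_, ?_⟩
    · show φ (b (SIdx.E)) = (b.repr (φ (b (SIdx.E)))) (SIdx.E) • b (SIdx.E)
      linear_combination (norm := module) hxE + tEF • b (SIdx.F) + tEH • b (SIdx.H) + tEZ • b (SIdx.Z) + tEX0 • b (SIdx.X 0) + tEX1 • b (SIdx.X 1) + tEY0 • b (SIdx.Y 0) + tEY1 • b (SIdx.Y 1) + tES • b (SIdx.S 0 1 h01)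
    · show φ (b (SIdx.F)) = (b.repr (φ (b (SIdx.E)))) (SIdx.E) • b (SIdx.F)
      linear_combination (norm := module) hxF + tFE • b (SIdx.E) + tFF • b (SIdx.F) + tFH • b (SIdx.H) + tFZ • b (SIdx.Z) + tFX0 • b (SIdx.X 0) + tFX1 • b (SIdx.X 1) + tFY0 • b (SIdx.Y 0) + tFY1 • b (SIdx.Y 1) + tFS • b (SIdx.S 0 1 h01)
    · show φ (b (SIdx.H)) = (b.repr (φ (b (SIdx.E)))) (SIdx.E) • b (SIdx.H)
      linear_combination (norm := module) hxH + tHE • b (SIdx.E) + tHF • b (SIdx.F) + tHH • b (SIdx.H) + tHZ • b (SIdx.Z) + tHX0 • b (SIdx.X 0) + tHX1 • b (SIdx.X 1) + tHY0 • b (SIdx.Y 0) + tHY1 • b (SIdx.Y 1) + tHS • b (SIdx.S 0 1 h01)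
    · intro i
      fin_cases i
      · show φ (b (SIdx.X 0)) = (b.repr (φ (b (SIdx.E)))) (SIdx.E) • b (SIdx.X 0)
        linear_combination (norm := module) hxX0 + tX0E • b (SIdx.E) + tX0F • b (SIdx.F) + tX0H • b (SIdx.H) + tX0Z • b (SIdx.Z) + tX0X0 • b (SIdx.X 0) + tX0X1 • b (SIdx.X 1) + tX0Y0 • b (SIdx.Y 0) + tX0Y1 • b (SIdx.Y 1) + tX0S • b (SIdx.S 0 1 h01)
      · show φ (b (SIdx.X 1)) = (b.repr (φ (b (SIdx.E)))) (SIdx.E) • b (SIdx.X 1)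
        linear_combination (norm := module) hxX1 + tX1E • b (SIdx.E) + tX1F • b (SIdx.F) + tX1H • b (SIdx.H) + tX1Z • b (SIdx.Z) + tX1X0 • b (SIdx.X 0) + tX1X1 • b (SIdx.X 1) + tX1Y0 • b (SIdx.Y 0) + tX1Y1 • b (SIdx.Y 1) + tX1S • b (SIdx.S 0 1 h01)
    · intro i
      fin_cases i
      · show φ (b (SIdx.Y 0)) = (b.repr (φ (b (SIdx.E)))) (SIdx.E) • b (SIdx.Y 0)
        linear_combination (norm := module) hxY0 + tY0E • b (SIdx.E) + tY0F • b (SIdx.F) + tY0H • b (SIdx.H) + tY0Z • b (SIdx.Z) + tY0X0 • b (SIdx.X 0) + tY0X1 • b (SIdx.X 1) + tY0Y0 • b (SIdx.Y 0) + tY0Y1 • b (SIdx.Y 1) + tY0S • b (SIdx.S 0 1 h01)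
      · show φ (b (SIdx.Y 1)) = (b.repr (φ (b (SIdx.E)))) (SIdx.E) • b (SIdx.Y 1)
        linear_combination (norm := module) hxY1 + tY1E • b (SIdx.E) + tY1F • b (SIdx.F) + tY1H • b (SIdx.H) + tY1Z • b (SIdx.Z) + tY1X0 • b (SIdx.X 0) + tY1X1 • b (SIdx.X 1) + tY1Y0 • b (SIdx.Y 0) + tY1Y1 • b (SIdx.Y 1) + tY1S • b (SIdx.S 0 1 h01)
    · show φ (b (SIdx.Z)) = (b.repr (φ (b (SIdx.E)))) (SIdx.E) • b (SIdx.Z)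
      linear_combination (norm := module) hxZ + tZE • b (SIdx.E) + tZF • b (SIdx.F) + tZH • b (SIdx.H) + tZZ • b (SIdx.Z) + tZX0 • b (SIdx.X 0) + tZX1 • b (SIdx.X 1) + tZY0 • b (SIdx.Y 0) + tZY1 • b (SIdx.Y 1) + tZS • b (SIdx.S 0 1 h01)
    · show φ (b (SIdx.S 0 1 h01)) = (b.repr (φ (b (SIdx.E)))) (SIdx.E) • b (SIdx.S 0 1 h01) + (b.repr (φ (b (SIdx.S 0 1 h01)))) (SIdx.Z) • b SIdx.Z
      linear_combination (norm := module) hxS + tSE • b (SIdx.E) + tSF • b (SIdx.F) + tSH • b (SIdx.H) + tSX0 • b (SIdx.X 0) + tSX1 • b (SIdx.X 1) + tSY0 • b (SIdx.Y 0) + tSY1 • b (SIdx.Y 1) + tSS • b (SIdx.S 0 1 h01)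
  · rintro ⟨θ, β, hE, hF, hH, hX, hY, hZ, hS⟩
    have hSidx : ∀ (j k : Fin 2) (h : j < k), (SIdx.S j k h : SIdx 2) = .S 0 1 h01 := by
      intro j k h
      fin_cases j <;> fin_cases k <;> first | exact absurd h (by decide) | rfl
    have hS' : φ (b (.S 0 1 h01)) = θ • b (.S 0 1 h01) + β • b .Z := hS
    have hmain : ∀ u w : SIdx 2, φ ⁅b u, b w⁆ = (2⁻¹ : ℂ) • (⁅φ (b u), b w⁆ + ⁅b u, φ (b w)⁆) := by
      intro u w
      cases u <;> cases w <;>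
        simp [hSidx, hE, hF, hH, hX, hY, hZ, hS', Tef hb, Tfe hb, The hb, Teh hb, Tfh hb,
          Thf hb, Txy hb, Tyx hb, Txx hb, Tyy hb, Thx hb, Txh hb, Thy hb, Tyh hb, Tey hb,
          Tye hb, Tex hb, Txe hb, Tfx hb, Txf hb, Tfy hb, Tyf hb, Tzu hb, Tuz hb, Tsx hb,
          Txs hb, Tsy hb, Tys hb, Tss hb, Tes hb, Tse hb, Tfs hb, Tsf hb, Ths hb, Tsh hb,
          lie_self, add_lie, smul_lie, lie_add, lie_smul, sub_lie, lie_sub, neg_lie, lie_neg,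
          smul_add, smul_sub, smul_neg, smul_smul, smul_zero, lie_zero, zero_lie] <;>
        module
    have hD : ∀ x y : L, φ ⁅x, y⁆ = (2⁻¹ : ℂ) • (⁅φ x, y⁆ + ⁅x, φ y⁆) := by
      let D : L →ₗ[ℂ] L →ₗ[ℂ] L := LinearMap.mk₂ ℂ (fun x y => φ ⁅x, y⁆)
        (by intros; simp only [add_lie, map_add]) (by intros; simp only [smul_lie, map_smul])
        (by intros; simp only [lie_add, map_add]) (by intros; simp only [lie_smul, map_smul])
      let D' : L →ₗ[ℂ] L →ₗ[ℂ] L := LinearMap.mk₂ ℂ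
        (fun x y => (2⁻¹ : ℂ) • (⁅φ x, y⁆ + ⁅x, φ y⁆))
        (by intros; simp only [map_add, add_lie]; module)
        (by intros; simp only [map_smul, smul_lie]; module)
        (by intros; simp only [map_add, lie_add]; module)
        (by intros; simp only [map_smul, lie_smul]; module)
      have hDD : D = D' := LinearMap.ext_basis b b fun i j => hmain i j
      intro x y
      have := congrFun (congrArg (fun (T : L →ₗ[ℂ] L →ₗ[ℂ] L) (x : L) => T x y) hDD) x
      simpa [D, D'] using this
    exact hD
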